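/- Let ξ = (ξ_1,...,ξ_G) be a vector of reals in which the component ξ_s appears exactly once (ξ_g ≠ ξ_s for all g ≠ s), let σ_1,...,σ_G > 0, and let α_1,...,α_G be reals. If for every natural number z, ∑_{g=1}^G α_g · exp(ξ_g z + σ_g z²/2) = 0, then α_s = 0. -/

import Mathlib

open Filter Finset

private lemma aux_tendsto {c d : ℝ} (h : c < 0 ∨ (c = 0 ∧ d < 0)) :
    Tendsto (fun z : ℕ => Real.exp (d * z + c * z ^ 2 / 2)) atTop (nhds 0) := by
  have hbot : Tendsto (fun z : ℕ => d * z + c * z ^ 2 / 2) atTop atBot := by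
    rcases h with hc | ⟨hc, hd⟩
    · have h1 : Tendsto (fun z : ℕ => (z : ℝ)) atTop atTop := tendsto_natCast_atTop_atTop
      have h2 : Tendsto (fun z : ℕ => c / 2 * z + d) atTop atBot :=
        tendsto_atBot_add_const_right _ d
          (Tendsto.const_mul_atTop_of_neg (by linarith) h1)
      have := Tendsto.atTop_mul_atBot₀ h1 h2
      refine this.congr fun z => by ring
    · subst hc
      have := Tendsto.const_mul_atTop_of_neg hd (tendsto_natCast_atTop_atTop (R := ℝ))
      refine this.congr fun z => by ring
  exact Real.tendsto_exp_atBot.comp hbot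

private lemma key (G : ℕ) (ξ σ α : Fin G → ℝ) :
    ∀ S : Finset (Fin G),
      (∀ z : ℕ, ∑ g ∈ S, α g * Real.exp (ξ g * z + σ g * z ^ 2 / 2) = 0) →
      ∀ b a : ℝ, ∑ g ∈ S.filter (fun g => σ g = b ∧ ξ g = a), α g = 0 := by
  intro S
  induction S using Finset.strongInduction with
  | _ S IH =>
    intro hS b0 a0
    rcases S.eq_empty_or_nonempty with rfl | hne
    · simp
    -- lexicographic maximum
    set b : ℝ := (S.image σ).max' (hne.image σ) with hb
    have hTne : (S.filter (fun g => σ g = b)).Nonempty := by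
      obtain ⟨g, hgS, hgb⟩ := Finset.mem_image.mp ((S.image σ).max'_mem (hne.image σ))
      exact ⟨g, Finset.mem_filter.mpr ⟨hgS, hgb⟩⟩
    set T := S.filter (fun g => σ g = b) with hT
    set a : ℝ := (T.image ξ).max' (hTne.image ξ) with ha
    have hσle : ∀ g ∈ S, σ g ≤ b := fun g hg =>
      (S.image σ).le_max' _ (Finset.mem_image_of_mem σ hg)
    have hξle : ∀ g ∈ S, σ g = b → ξ g ≤ a := fun g hg hgb =>
      (T.image ξ).le_max' _ (Finset.mem_image_of_mem ξ (Finset.mem_filter.mpr ⟨hg, hgb⟩))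
    -- the shifted sequence is identically zero
    have hzero : ∀ z : ℕ,
        ∑ g ∈ S, α g * Real.exp ((ξ g - a) * z + (σ g - b) * z ^ 2 / 2) = 0 := by
      intro z
      have := hS z
      have : Real.exp (-(a * z + b * z ^ 2 / 2)) *
          ∑ g ∈ S, α g * Real.exp (ξ g * z + σ g * z ^ 2 / 2) = 0 := by
        rw [this, mul_zero]
      rw [Finset.mul_sum] at this
      rw [← this]
      refine Finset.sum_congr rfl fun g hg => ?_
      rw [show (ξ g - a) * (z:ℝ) + (σ g - b) * (z:ℝ) ^ 2 / 2
          = -(a * z + b * (z:ℝ) ^ 2 / 2) + (ξ g * z + σ g * (z:ℝ) ^ 2 / 2) by ring,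
        Real.exp_add]
      ring
    -- tendsto to the class sum
    have htend : Tendsto
        (fun z : ℕ => ∑ g ∈ S, α g * Real.exp ((ξ g - a) * z + (σ g - b) * z ^ 2 / 2))
        atTop (nhds (∑ g ∈ S, if σ g = b ∧ ξ g = a then α g else 0)) := by
      refine tendsto_finset_sum _ fun g hg => ?_
      by_cases hcase : σ g = b ∧ ξ g = a
      · rw [if_pos hcase]
        have hconst : ∀ z : ℕ, α g * Real.exp ((ξ g - a) * z + (σ g - b) * z ^ 2 / 2) = α g := by
          intro z; rw [hcase.1, hcase.2]; simp
        exact Tendsto.congr (fun z => (hconst z).symm) tendsto_const_nhds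
      · simp only [hcase, if_false]
        have h0 : Tendsto
            (fun z : ℕ => Real.exp ((ξ g - a) * z + (σ g - b) * z ^ 2 / 2)) atTop (nhds 0) := by
          apply aux_tendsto
          rcases lt_or_eq_of_le (hσle g hg) with hlt | heq
          · exact Or.inl (by linarith)
          · right
            have hξ : ξ g ≤ a := hξle g hg heq
            rcases lt_or_eq_of_le hξ with h' | h'
            · exact ⟨by linarith, by linarith⟩
            · exact absurd ⟨heq, h'⟩ hcase
        have := h0.const_mul (α g)
        simpa using this
    -- class sum is zero
    have hclass : ∑ g ∈ S, (if σ g = b ∧ ξ g = a then α g else 0) = 0 := by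
      have : Tendsto (fun _ : ℕ => (0 : ℝ)) atTop
          (nhds (∑ g ∈ S, if σ g = b ∧ ξ g = a then α g else 0)) := by
        refine htend.congr fun z => (hzero z)
      exact (tendsto_nhds_unique tendsto_const_nhds this).symm
    have hclass' : ∑ g ∈ S.filter (fun g => σ g = b ∧ ξ g = a), α g = 0 := by
      rw [Finset.sum_filter]; exact hclass
    -- if target pair is the max pair, done
    by_cases hpair : b0 = b ∧ a0 = a
    · rw [hpair.1, hpair.2]; exact hclass'
    -- otherwise remove the max class and induct
    · set C := S.filter (fun g => σ g = b ∧ ξ g = a) with hC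
      have hCne : C.Nonempty := by
        obtain ⟨g, hgT, hga⟩ := Finset.mem_image.mp ((T.image ξ).max'_mem (hTne.image ξ))
        obtain ⟨hgS, hgb⟩ := Finset.mem_filter.mp hgT
        exact ⟨g, Finset.mem_filter.mpr ⟨hgS, hgb, hga⟩⟩
      set S' := S \ C with hS'
      have hsub : S' ⊂ S := by
        refine Finset.sdiff_ssubset ?_ hCne
        exact Finset.filter_subset _ _
      have hS'sum : ∀ z : ℕ, ∑ g ∈ S', α g * Real.exp (ξ g * z + σ g * z ^ 2 / 2) = 0 := by
        intro z
        have hsplit := Finset.sum_sdiff (Finset.filter_subset (fun g => σ g = b ∧ ξ g = a) S)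
          (f := fun g => α g * Real.exp (ξ g * z + σ g * z ^ 2 / 2))
        have hCsum : ∑ g ∈ C, α g * Real.exp (ξ g * z + σ g * z ^ 2 / 2) = 0 := by
          have : ∑ g ∈ C, α g * Real.exp (ξ g * z + σ g * z ^ 2 / 2)
              = (∑ g ∈ C, α g) * Real.exp (a * z + b * z ^ 2 / 2) := by
            rw [Finset.sum_mul]
            refine Finset.sum_congr rfl fun g hg => ?_
            obtain ⟨_, hgb, hga⟩ := Finset.mem_filter.mp hg
            rw [hgb, hga]
          rw [this, hclass', zero_mul]
        have := hS z
        rw [← hsplit, hCsum, add_zero] at this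
        exact this
      have hfil : S.filter (fun g => σ g = b0 ∧ ξ g = a0)
          = S'.filter (fun g => σ g = b0 ∧ ξ g = a0) := by
        ext g
        simp only [Finset.mem_filter, hS', Finset.mem_sdiff, hC]
        constructor
        · rintro ⟨hgS, hb0, ha0⟩
          refine ⟨⟨hgS, ?_⟩, hb0, ha0⟩
          intro hgC
          exact hpair ⟨hb0.symm.trans hgC.2.1, ha0.symm.trans hgC.2.2⟩
        · rintro ⟨⟨hgS, _⟩, hb0, ha0⟩
          exact ⟨hgS, hb0, ha0⟩
      rw [hfil]
      exact IH S' hsub hS'sum b0 a0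

/-- Good-vector lemma: if `ξ s` appears exactly once among the components of `ξ`,
all `σ g > 0`, and `∑ g, α g * exp(ξ g * z + σ g * z²/2) = 0` for every natural `z`,
then `α s = 0`. -/
theorem stmt_0 (G : ℕ) (hG : 0 < G) (ξ σ α : Fin G → ℝ) (s : Fin G)
    (hgood : ∀ g, g ≠ s → ξ g ≠ ξ s)
    (hσ : ∀ g, 0 < σ g)
    (h : ∀ z : ℕ, ∑ g, α g * Real.exp (ξ g * z + σ g * z ^ 2 / 2) = 0) :
    α s = 0 := by
  have := key G ξ σ α Finset.univ (fun z => h z) (σ s) (ξ s)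
  have hfil : Finset.univ.filter (fun g => σ g = σ s ∧ ξ g = ξ s) = {s} := by
    ext g
    simp only [Finset.mem_filter, Finset.mem_univ, true_and, Finset.mem_singleton]
    constructor
    · rintro ⟨-, hξg⟩
      by_contra hne
      exact hgood g hne hξg
    · rintro rfl; exact ⟨rfl, rfl⟩
  rw [hfil, Finset.sum_singleton] at this
  exact this
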